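/- Let Ω = (0,a) × (0,b) ⊂ ℝ² be an open rectangle, g > 0, H > 0, ρ₀₀ > 0, and ρ₀(z) = ρ₀₀·exp(−z/H). Suppose ρ, u, w, p : Ω × [0,T] → ℝ are continuously differentiable (up to the boundary), ρ > 0, they satisfy the 2D incompressible Euler equations ∂ₜρ + ∂ₓ(ρu) + ∂_z(ρw) = 0, ∂ₜ(ρu) + ∂ₓ(ρu²) + ∂_z(ρuw) = −∂ₓp, ∂ₜ(ρw) + ∂ₓ(ρuw) + ∂_z(ρw²) = −∂_z p − ρg, ∂ₓu + ∂_z w = 0, together with the no-flux boundary condition u = 0 on the vertical sides {x = 0, a} and w = 0 on the horizontal sides {z = 0, b}. Then the generalized wave-energy functional H_nonl(t) = ∫_Ω [ ρ(u² + w²)/2 + ρgz + gH( ρ·ln(ρ/ρ₀₀) + ρ₀(z) − ρ ) ] dx dz is constant in t on [0,T]. -/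

import Mathlib

open MeasureTheory Set
namespace EnergyAux
noncomputable def P1 (f : ℝ → ℝ → ℝ → ℝ) (x z t : ℝ) : ℝ :=
  fderiv ℝ (fun q : ℝ × ℝ × ℝ => f q.1 q.2.1 q.2.2) (x, z, t) (1, 0, 0)
noncomputable def P2 (f : ℝ → ℝ → ℝ → ℝ) (x z t : ℝ) : ℝ :=
  fderiv ℝ (fun q : ℝ × ℝ × ℝ => f q.1 q.2.1 q.2.2) (x, z, t) (0, 1, 0)
noncomputable def P3 (f : ℝ → ℝ → ℝ → ℝ) (x z t : ℝ) : ℝ :=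
  fderiv ℝ (fun q : ℝ × ℝ × ℝ => f q.1 q.2.1 q.2.2) (x, z, t) (0, 0, 1)
variable {f : ℝ → ℝ → ℝ → ℝ}
lemma hasD1 (hf : ContDiff ℝ 1 fun q : ℝ × ℝ × ℝ => f q.1 q.2.1 q.2.2) (x z t : ℝ) :
    HasDerivAt (fun y => f y z t) (P1 f x z t) x := by
  have h1 : HasDerivAt (fun y : ℝ => ((y, z, t) : ℝ × ℝ × ℝ)) (1, 0, 0) x :=
    (hasDerivAt_id x).prodMk ((hasDerivAt_const x z).prodMk (hasDerivAt_const x t))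
  exact ((hf.differentiable one_ne_zero (x, z, t)).hasFDerivAt).comp_hasDerivAt x h1
lemma hasD2 (hf : ContDiff ℝ 1 fun q : ℝ × ℝ × ℝ => f q.1 q.2.1 q.2.2) (x z t : ℝ) :
    HasDerivAt (fun y => f x y t) (P2 f x z t) z := by
  have h1 : HasDerivAt (fun y : ℝ => ((x, y, t) : ℝ × ℝ × ℝ)) (0, 1, 0) z :=
    (hasDerivAt_const z x).prodMk ((hasDerivAt_id z).prodMk (hasDerivAt_const z t))
  exact ((hf.differentiable one_ne_zero (x, z, t)).hasFDerivAt).comp_hasDerivAt z h1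
lemma hasD3 (hf : ContDiff ℝ 1 fun q : ℝ × ℝ × ℝ => f q.1 q.2.1 q.2.2) (x z t : ℝ) :
    HasDerivAt (fun s => f x z s) (P3 f x z t) t := by
  have h1 : HasDerivAt (fun s : ℝ => ((x, z, s) : ℝ × ℝ × ℝ)) (0, 0, 1) t :=
    (hasDerivAt_const t x).prodMk ((hasDerivAt_const t z).prodMk (hasDerivAt_id t))
  exact ((hf.differentiable one_ne_zero (x, z, t)).hasFDerivAt).comp_hasDerivAt t h1

lemma contP1 (hf : ContDiff ℝ 1 fun q : ℝ × ℝ × ℝ => f q.1 q.2.1 q.2.2) :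
    Continuous (fun q : ℝ × ℝ × ℝ => P1 f q.1 q.2.1 q.2.2) :=
  ((hf.continuous_fderiv one_ne_zero).clm_apply continuous_const).congr (fun _ => rfl)
lemma contP2 (hf : ContDiff ℝ 1 fun q : ℝ × ℝ × ℝ => f q.1 q.2.1 q.2.2) :
    Continuous (fun q : ℝ × ℝ × ℝ => P2 f q.1 q.2.1 q.2.2) :=
  ((hf.continuous_fderiv one_ne_zero).clm_apply continuous_const).congr (fun _ => rfl)
lemma contP3 (hf : ContDiff ℝ 1 fun q : ℝ × ℝ × ℝ => f q.1 q.2.1 q.2.2) :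
    Continuous (fun q : ℝ × ℝ × ℝ => P3 f q.1 q.2.1 q.2.2) :=
  ((hf.continuous_fderiv one_ne_zero).clm_apply continuous_const).congr (fun _ => rfl)

variable (g H ρ₀₀ : ℝ) (ρ u w p : ℝ → ℝ → ℝ → ℝ)

noncomputable def ener (x z t : ℝ) : ℝ :=
  ρ x z t * ((u x z t) ^ 2 + (w x z t) ^ 2) / 2 + ρ x z t * g * z
    + g * H * (ρ x z t * Real.log (ρ x z t / ρ₀₀) + ρ₀₀ * Real.exp (-z / H) - ρ x z t)

noncomputable def psi (x z t : ℝ) : ℝ :=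
  ρ x z t * ((u x z t) ^ 2 + (w x z t) ^ 2) / 2 + ρ x z t * g * z
    + g * H * (ρ x z t * Real.log (ρ x z t / ρ₀₀) - ρ x z t) + p x z t

noncomputable def eT (x z t : ℝ) : ℝ :=
  P3 ρ x z t * ((u x z t) ^ 2 + (w x z t) ^ 2) / 2
    + ρ x z t * (u x z t * P3 u x z t + w x z t * P3 w x z t)
    + g * z * P3 ρ x z t + g * H * (Real.log (ρ x z t / ρ₀₀) * P3 ρ x z t)

noncomputable def psiX (x z t : ℝ) : ℝ :=
  P1 ρ x z t * ((u x z t) ^ 2 + (w x z t) ^ 2) / 2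
    + ρ x z t * (u x z t * P1 u x z t + w x z t * P1 w x z t)
    + g * z * P1 ρ x z t + g * H * (Real.log (ρ x z t / ρ₀₀) * P1 ρ x z t) + P1 p x z t

noncomputable def psiZ (x z t : ℝ) : ℝ :=
  P2 ρ x z t * ((u x z t) ^ 2 + (w x z t) ^ 2) / 2
    + ρ x z t * (u x z t * P2 u x z t + w x z t * P2 w x z t)
    + g * z * P2 ρ x z t + ρ x z t * g
    + g * H * (Real.log (ρ x z t / ρ₀₀) * P2 ρ x z t) + P2 p x z t

noncomputable def FX (x z t : ℝ) : ℝ :=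
  P1 u x z t * psi g H ρ₀₀ ρ u w p x z t + u x z t * psiX g H ρ₀₀ ρ u w p x z t
noncomputable def GZ (x z t : ℝ) : ℝ :=
  P2 w x z t * psi g H ρ₀₀ ρ u w p x z t + w x z t * psiZ g H ρ₀₀ ρ u w p x z t

variable {ρ u w p}

lemma ener_T (hρ : ContDiff ℝ 1 fun q : ℝ × ℝ × ℝ => ρ q.1 q.2.1 q.2.2)
    (hu : ContDiff ℝ 1 fun q : ℝ × ℝ × ℝ => u q.1 q.2.1 q.2.2)
    (hw : ContDiff ℝ 1 fun q : ℝ × ℝ × ℝ => w q.1 q.2.1 q.2.2)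
    (x z t : ℝ) (h0 : ρ x z t ≠ 0) (h00 : ρ₀₀ ≠ 0) :
    HasDerivAt (fun s => ener g H ρ₀₀ ρ u w x z s) (eT g H ρ₀₀ ρ u w x z t) t := by
  have hρt := hasD3 hρ x z t
  have hut := hasD3 hu x z t
  have hwt := hasD3 hw x z t
  have hlog : HasDerivAt (fun s => Real.log (ρ x z s / ρ₀₀))
      ((ρ x z t / ρ₀₀)⁻¹ * (P3 ρ x z t / ρ₀₀)) t := by
    have := (Real.hasDerivAt_log (div_ne_zero h0 h00)).comp t (hρt.div_const ρ₀₀)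
    exact this
  have h1 := (hρt.mul ((hut.pow 2).add (hwt.pow 2))).div_const 2
  have h2 := (hρt.mul_const g).mul_const z
  have h3 := (((hρt.mul hlog).add (hasDerivAt_const t (ρ₀₀ * Real.exp (-z / H)))).sub
    hρt).const_mul (g * H)
  have hall : HasDerivAt (fun s => ener g H ρ₀₀ ρ u w x z s) _ t := (h1.add h2).add h3
  convert hall using 1
  unfold eT
  simp only [Pi.add_apply, Pi.pow_apply]
  field_simp
  ring

lemma psi_X (hρ : ContDiff ℝ 1 fun q : ℝ × ℝ × ℝ => ρ q.1 q.2.1 q.2.2)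
    (hu : ContDiff ℝ 1 fun q : ℝ × ℝ × ℝ => u q.1 q.2.1 q.2.2)
    (hw : ContDiff ℝ 1 fun q : ℝ × ℝ × ℝ => w q.1 q.2.1 q.2.2)
    (hp : ContDiff ℝ 1 fun q : ℝ × ℝ × ℝ => p q.1 q.2.1 q.2.2)
    (x z t : ℝ) (h0 : ρ x z t ≠ 0) (h00 : ρ₀₀ ≠ 0) :
    HasDerivAt (fun y => psi g H ρ₀₀ ρ u w p y z t) (psiX g H ρ₀₀ ρ u w p x z t) x := by
  have hρx := hasD1 hρ x z t
  have hux := hasD1 hu x z t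
  have hwx := hasD1 hw x z t
  have hpx := hasD1 hp x z t
  have hlog : HasDerivAt (fun y => Real.log (ρ y z t / ρ₀₀))
      ((ρ x z t / ρ₀₀)⁻¹ * (P1 ρ x z t / ρ₀₀)) x := by
    have := (Real.hasDerivAt_log (div_ne_zero h0 h00)).comp x (hρx.div_const ρ₀₀)
    exact this
  have h1 := (hρx.mul ((hux.pow 2).add (hwx.pow 2))).div_const 2
  have h2 := (hρx.mul_const g).mul_const z
  have h3 := (((hρx.mul hlog)).sub hρx).const_mul (g * H)
  have hall : HasDerivAt (fun y => psi g H ρ₀₀ ρ u w p y z t) _ x :=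
    (((h1.add h2).add h3).add hpx)
  convert hall using 1
  unfold psiX
  simp only [Pi.add_apply, Pi.pow_apply]
  field_simp
  ring

lemma psi_Z (hρ : ContDiff ℝ 1 fun q : ℝ × ℝ × ℝ => ρ q.1 q.2.1 q.2.2)
    (hu : ContDiff ℝ 1 fun q : ℝ × ℝ × ℝ => u q.1 q.2.1 q.2.2)
    (hw : ContDiff ℝ 1 fun q : ℝ × ℝ × ℝ => w q.1 q.2.1 q.2.2)
    (hp : ContDiff ℝ 1 fun q : ℝ × ℝ × ℝ => p q.1 q.2.1 q.2.2)
    (x z t : ℝ) (h0 : ρ x z t ≠ 0) (h00 : ρ₀₀ ≠ 0) :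
    HasDerivAt (fun y => psi g H ρ₀₀ ρ u w p x y t) (psiZ g H ρ₀₀ ρ u w p x z t) z := by
  have hρz := hasD2 hρ x z t
  have huz := hasD2 hu x z t
  have hwz := hasD2 hw x z t
  have hpz := hasD2 hp x z t
  have hlog : HasDerivAt (fun y => Real.log (ρ x y t / ρ₀₀))
      ((ρ x z t / ρ₀₀)⁻¹ * (P2 ρ x z t / ρ₀₀)) z := by
    have := (Real.hasDerivAt_log (div_ne_zero h0 h00)).comp z (hρz.div_const ρ₀₀)
    exact this
  have h1 := (hρz.mul ((huz.pow 2).add (hwz.pow 2))).div_const 2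
  have h2 := (hρz.mul_const g).mul (hasDerivAt_id z)
  have h3 := (((hρz.mul hlog)).sub hρz).const_mul (g * H)
  have hall : HasDerivAt (fun y => psi g H ρ₀₀ ρ u w p x y t) _ z :=
    (((h1.add h2).add h3).add hpz)
  convert hall using 1
  unfold psiZ
  simp only [Pi.add_apply, Pi.pow_apply, id]
  field_simp
  ring

lemma F_X (hρ : ContDiff ℝ 1 fun q : ℝ × ℝ × ℝ => ρ q.1 q.2.1 q.2.2)
    (hu : ContDiff ℝ 1 fun q : ℝ × ℝ × ℝ => u q.1 q.2.1 q.2.2)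
    (hw : ContDiff ℝ 1 fun q : ℝ × ℝ × ℝ => w q.1 q.2.1 q.2.2)
    (hp : ContDiff ℝ 1 fun q : ℝ × ℝ × ℝ => p q.1 q.2.1 q.2.2)
    (x z t : ℝ) (h0 : ρ x z t ≠ 0) (h00 : ρ₀₀ ≠ 0) :
    HasDerivAt (fun y => u y z t * psi g H ρ₀₀ ρ u w p y z t)
      (FX g H ρ₀₀ ρ u w p x z t) x :=
  (hasD1 hu x z t).mul (psi_X g H ρ₀₀ hρ hu hw hp x z t h0 h00)

lemma G_Z (hρ : ContDiff ℝ 1 fun q : ℝ × ℝ × ℝ => ρ q.1 q.2.1 q.2.2)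
    (hu : ContDiff ℝ 1 fun q : ℝ × ℝ × ℝ => u q.1 q.2.1 q.2.2)
    (hw : ContDiff ℝ 1 fun q : ℝ × ℝ × ℝ => w q.1 q.2.1 q.2.2)
    (hp : ContDiff ℝ 1 fun q : ℝ × ℝ × ℝ => p q.1 q.2.1 q.2.2)
    (x z t : ℝ) (h0 : ρ x z t ≠ 0) (h00 : ρ₀₀ ≠ 0) :
    HasDerivAt (fun y => w x y t * psi g H ρ₀₀ ρ u w p x y t)
      (GZ g H ρ₀₀ ρ u w p x z t) z :=
  (hasD2 hw x z t).mul (psi_Z g H ρ₀₀ hρ hu hw hp x z t h0 h00)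


lemma keyIdentity (hρ : ContDiff ℝ 1 fun q : ℝ × ℝ × ℝ => ρ q.1 q.2.1 q.2.2)
    (hu : ContDiff ℝ 1 fun q : ℝ × ℝ × ℝ => u q.1 q.2.1 q.2.2)
    (hw : ContDiff ℝ 1 fun q : ℝ × ℝ × ℝ => w q.1 q.2.1 q.2.2)
    (hp : ContDiff ℝ 1 fun q : ℝ × ℝ × ℝ => p q.1 q.2.1 q.2.2)
    (x z t : ℝ)
    (e1 : deriv (fun s => ρ x z s) t
        + deriv (fun y => ρ y z t * u y z t) x
        + deriv (fun y => ρ x y t * w x y t) z = 0)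
    (e2 : deriv (fun s => ρ x z s * u x z s) t
        + deriv (fun y => ρ y z t * (u y z t) ^ 2) x
        + deriv (fun y => ρ x y t * u x y t * w x y t) z
        = -deriv (fun y => p y z t) x)
    (e3 : deriv (fun s => ρ x z s * w x z s) t
        + deriv (fun y => ρ y z t * u y z t * w y z t) x
        + deriv (fun y => ρ x y t * (w x y t) ^ 2) z
        = -deriv (fun y => p x y t) z - ρ x z t * g)
    (e4 : deriv (fun y => u y z t) x + deriv (fun y => w x y t) z = 0) :
    eT g H ρ₀₀ ρ u w x z t = -(FX g H ρ₀₀ ρ u w p x z t + GZ g H ρ₀₀ ρ u w p x z t) := by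
  rw [(hasD3 hρ x z t).deriv, ((hasD1 hρ x z t).fun_mul (hasD1 hu x z t)).deriv,
    ((hasD2 hρ x z t).fun_mul (hasD2 hw x z t)).deriv] at e1
  rw [((hasD3 hρ x z t).fun_mul (hasD3 hu x z t)).deriv,
    ((hasD1 hρ x z t).fun_mul ((hasD1 hu x z t).fun_pow 2)).deriv,
    (((hasD2 hρ x z t).fun_mul (hasD2 hu x z t)).fun_mul (hasD2 hw x z t)).deriv,
    (hasD1 hp x z t).deriv] at e2
  rw [((hasD3 hρ x z t).fun_mul (hasD3 hw x z t)).deriv,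
    (((hasD1 hρ x z t).fun_mul (hasD1 hu x z t)).fun_mul (hasD1 hw x z t)).deriv,
    ((hasD2 hρ x z t).fun_mul ((hasD2 hw x z t).fun_pow 2)).deriv,
    (hasD2 hp x z t).deriv] at e3
  rw [(hasD1 hu x z t).deriv, (hasD2 hw x z t).deriv] at e4
  unfold eT FX GZ psiX psiZ psi
  linear_combination
    (((u x z t) ^ 2 + (w x z t) ^ 2) / 2 + g * z + g * H * Real.log (ρ x z t / ρ₀₀)
      - (u x z t) ^ 2 - (w x z t) ^ 2) * e1
    + u x z t * e2 + w x z t * e3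
    + (p x z t - g * H * ρ x z t) * e4


lemma contOn_log (hρ : ContDiff ℝ 1 fun q : ℝ × ℝ × ℝ => ρ q.1 q.2.1 q.2.2) (h00 : ρ₀₀ ≠ 0) :
    ContinuousOn (fun q : ℝ × ℝ × ℝ => Real.log (ρ q.1 q.2.1 q.2.2 / ρ₀₀))
      {q : ℝ × ℝ × ℝ | ρ q.1 q.2.1 q.2.2 ≠ 0} :=
  ContinuousOn.log ((hρ.continuous.div_const ρ₀₀).continuousOn)
    (fun q hq => div_ne_zero hq h00)

lemma contOn_ener (hρ : ContDiff ℝ 1 fun q : ℝ × ℝ × ℝ => ρ q.1 q.2.1 q.2.2)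
    (hu : ContDiff ℝ 1 fun q : ℝ × ℝ × ℝ => u q.1 q.2.1 q.2.2)
    (hw : ContDiff ℝ 1 fun q : ℝ × ℝ × ℝ => w q.1 q.2.1 q.2.2) (h00 : ρ₀₀ ≠ 0) :
    ContinuousOn (fun q : ℝ × ℝ × ℝ => ener g H ρ₀₀ ρ u w q.1 q.2.1 q.2.2)
      {q : ℝ × ℝ × ℝ | ρ q.1 q.2.1 q.2.2 ≠ 0} := by
  have cρ := hρ.continuous.continuousOn (s := {q : ℝ × ℝ × ℝ | ρ q.1 q.2.1 q.2.2 ≠ 0})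
  have cu := hu.continuous.continuousOn (s := {q : ℝ × ℝ × ℝ | ρ q.1 q.2.1 q.2.2 ≠ 0})
  have cw := hw.continuous.continuousOn (s := {q : ℝ × ℝ × ℝ | ρ q.1 q.2.1 q.2.2 ≠ 0})
  have cz : ContinuousOn (fun q : ℝ × ℝ × ℝ => q.2.1) _ :=
    (continuous_snd.fst).continuousOn (s := {q : ℝ × ℝ × ℝ | ρ q.1 q.2.1 q.2.2 ≠ 0})
  have cL := contOn_log (ρ₀₀ := ρ₀₀) hρ h00
  have cexp : ContinuousOn (fun q : ℝ × ℝ × ℝ => ρ₀₀ * Real.exp (-q.2.1 / H)) _ :=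
    (continuous_const.mul (Real.continuous_exp.comp
      ((continuous_snd.fst.neg).div_const H))).continuousOn
      (s := {q : ℝ × ℝ × ℝ | ρ q.1 q.2.1 q.2.2 ≠ 0})
  exact (((cρ.mul ((cu.pow 2).add (cw.pow 2))).div_const 2).add ((cρ.mul continuousOn_const).mul cz)).add
    (continuousOn_const.mul (((cρ.mul cL).add cexp).sub cρ))

lemma contOn_eT (hρ : ContDiff ℝ 1 fun q : ℝ × ℝ × ℝ => ρ q.1 q.2.1 q.2.2)
    (hu : ContDiff ℝ 1 fun q : ℝ × ℝ × ℝ => u q.1 q.2.1 q.2.2)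
    (hw : ContDiff ℝ 1 fun q : ℝ × ℝ × ℝ => w q.1 q.2.1 q.2.2) (h00 : ρ₀₀ ≠ 0) :
    ContinuousOn (fun q : ℝ × ℝ × ℝ => eT g H ρ₀₀ ρ u w q.1 q.2.1 q.2.2)
      {q : ℝ × ℝ × ℝ | ρ q.1 q.2.1 q.2.2 ≠ 0} := by
  have cρ := hρ.continuous.continuousOn (s := {q : ℝ × ℝ × ℝ | ρ q.1 q.2.1 q.2.2 ≠ 0})
  have cu := hu.continuous.continuousOn (s := {q : ℝ × ℝ × ℝ | ρ q.1 q.2.1 q.2.2 ≠ 0})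
  have cw := hw.continuous.continuousOn (s := {q : ℝ × ℝ × ℝ | ρ q.1 q.2.1 q.2.2 ≠ 0})
  have cz : ContinuousOn (fun q : ℝ × ℝ × ℝ => q.2.1) _ :=
    (continuous_snd.fst).continuousOn (s := {q : ℝ × ℝ × ℝ | ρ q.1 q.2.1 q.2.2 ≠ 0})
  have cρ3 := (contP3 hρ).continuousOn (s := {q : ℝ × ℝ × ℝ | ρ q.1 q.2.1 q.2.2 ≠ 0})
  have cu3 := (contP3 hu).continuousOn (s := {q : ℝ × ℝ × ℝ | ρ q.1 q.2.1 q.2.2 ≠ 0})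
  have cw3 := (contP3 hw).continuousOn (s := {q : ℝ × ℝ × ℝ | ρ q.1 q.2.1 q.2.2 ≠ 0})
  have cL := contOn_log (ρ₀₀ := ρ₀₀) hρ h00
  exact ((((cρ3.mul ((cu.pow 2).add (cw.pow 2))).div_const 2).add
      (cρ.mul ((cu.mul cu3).add (cw.mul cw3)))).add
    ((continuousOn_const.mul cz).mul cρ3)).add (continuousOn_const.mul (cL.mul cρ3))

lemma contOn_psi (hρ : ContDiff ℝ 1 fun q : ℝ × ℝ × ℝ => ρ q.1 q.2.1 q.2.2)
    (hu : ContDiff ℝ 1 fun q : ℝ × ℝ × ℝ => u q.1 q.2.1 q.2.2)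
    (hw : ContDiff ℝ 1 fun q : ℝ × ℝ × ℝ => w q.1 q.2.1 q.2.2)
    (hp : ContDiff ℝ 1 fun q : ℝ × ℝ × ℝ => p q.1 q.2.1 q.2.2) (h00 : ρ₀₀ ≠ 0) :
    ContinuousOn (fun q : ℝ × ℝ × ℝ => psi g H ρ₀₀ ρ u w p q.1 q.2.1 q.2.2)
      {q : ℝ × ℝ × ℝ | ρ q.1 q.2.1 q.2.2 ≠ 0} := by
  have cρ := hρ.continuous.continuousOn (s := {q : ℝ × ℝ × ℝ | ρ q.1 q.2.1 q.2.2 ≠ 0})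
  have cu := hu.continuous.continuousOn (s := {q : ℝ × ℝ × ℝ | ρ q.1 q.2.1 q.2.2 ≠ 0})
  have cw := hw.continuous.continuousOn (s := {q : ℝ × ℝ × ℝ | ρ q.1 q.2.1 q.2.2 ≠ 0})
  have cp := hp.continuous.continuousOn (s := {q : ℝ × ℝ × ℝ | ρ q.1 q.2.1 q.2.2 ≠ 0})
  have cz : ContinuousOn (fun q : ℝ × ℝ × ℝ => q.2.1) _ :=
    (continuous_snd.fst).continuousOn (s := {q : ℝ × ℝ × ℝ | ρ q.1 q.2.1 q.2.2 ≠ 0})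
  have cL := contOn_log (ρ₀₀ := ρ₀₀) hρ h00
  exact ((((cρ.mul ((cu.pow 2).add (cw.pow 2))).div_const 2).add
      ((cρ.mul continuousOn_const).mul cz)).add
    (continuousOn_const.mul ((cρ.mul cL).sub cρ))).add cp

lemma contOn_FX (hρ : ContDiff ℝ 1 fun q : ℝ × ℝ × ℝ => ρ q.1 q.2.1 q.2.2)
    (hu : ContDiff ℝ 1 fun q : ℝ × ℝ × ℝ => u q.1 q.2.1 q.2.2)
    (hw : ContDiff ℝ 1 fun q : ℝ × ℝ × ℝ => w q.1 q.2.1 q.2.2)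
    (hp : ContDiff ℝ 1 fun q : ℝ × ℝ × ℝ => p q.1 q.2.1 q.2.2) (h00 : ρ₀₀ ≠ 0) :
    ContinuousOn (fun q : ℝ × ℝ × ℝ => FX g H ρ₀₀ ρ u w p q.1 q.2.1 q.2.2)
      {q : ℝ × ℝ × ℝ | ρ q.1 q.2.1 q.2.2 ≠ 0} := by
  have cρ := hρ.continuous.continuousOn (s := {q : ℝ × ℝ × ℝ | ρ q.1 q.2.1 q.2.2 ≠ 0})
  have cu := hu.continuous.continuousOn (s := {q : ℝ × ℝ × ℝ | ρ q.1 q.2.1 q.2.2 ≠ 0})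
  have cw := hw.continuous.continuousOn (s := {q : ℝ × ℝ × ℝ | ρ q.1 q.2.1 q.2.2 ≠ 0})
  have cz : ContinuousOn (fun q : ℝ × ℝ × ℝ => q.2.1) _ :=
    (continuous_snd.fst).continuousOn (s := {q : ℝ × ℝ × ℝ | ρ q.1 q.2.1 q.2.2 ≠ 0})
  have cρ1 := (contP1 hρ).continuousOn (s := {q : ℝ × ℝ × ℝ | ρ q.1 q.2.1 q.2.2 ≠ 0})
  have cu1 := (contP1 hu).continuousOn (s := {q : ℝ × ℝ × ℝ | ρ q.1 q.2.1 q.2.2 ≠ 0})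
  have cw1 := (contP1 hw).continuousOn (s := {q : ℝ × ℝ × ℝ | ρ q.1 q.2.1 q.2.2 ≠ 0})
  have cp1 := (contP1 hp).continuousOn (s := {q : ℝ × ℝ × ℝ | ρ q.1 q.2.1 q.2.2 ≠ 0})
  have cL := contOn_log (ρ₀₀ := ρ₀₀) hρ h00
  have cpsi := contOn_psi g H ρ₀₀ hρ hu hw hp h00
  have cpsiX : ContinuousOn (fun q : ℝ × ℝ × ℝ => psiX g H ρ₀₀ ρ u w p q.1 q.2.1 q.2.2)
      {q : ℝ × ℝ × ℝ | ρ q.1 q.2.1 q.2.2 ≠ 0} :=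
    (((((cρ1.mul ((cu.pow 2).add (cw.pow 2))).div_const 2).add
      (cρ.mul ((cu.mul cu1).add (cw.mul cw1)))).add
      ((continuousOn_const.mul cz).mul cρ1)).add
      (continuousOn_const.mul (cL.mul cρ1))).add cp1
  exact (cu1.mul cpsi).add (cu.mul cpsiX)

lemma contOn_GZ (hρ : ContDiff ℝ 1 fun q : ℝ × ℝ × ℝ => ρ q.1 q.2.1 q.2.2)
    (hu : ContDiff ℝ 1 fun q : ℝ × ℝ × ℝ => u q.1 q.2.1 q.2.2)
    (hw : ContDiff ℝ 1 fun q : ℝ × ℝ × ℝ => w q.1 q.2.1 q.2.2)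
    (hp : ContDiff ℝ 1 fun q : ℝ × ℝ × ℝ => p q.1 q.2.1 q.2.2) (h00 : ρ₀₀ ≠ 0) :
    ContinuousOn (fun q : ℝ × ℝ × ℝ => GZ g H ρ₀₀ ρ u w p q.1 q.2.1 q.2.2)
      {q : ℝ × ℝ × ℝ | ρ q.1 q.2.1 q.2.2 ≠ 0} := by
  have cρ := hρ.continuous.continuousOn (s := {q : ℝ × ℝ × ℝ | ρ q.1 q.2.1 q.2.2 ≠ 0})
  have cu := hu.continuous.continuousOn (s := {q : ℝ × ℝ × ℝ | ρ q.1 q.2.1 q.2.2 ≠ 0})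
  have cw := hw.continuous.continuousOn (s := {q : ℝ × ℝ × ℝ | ρ q.1 q.2.1 q.2.2 ≠ 0})
  have cz : ContinuousOn (fun q : ℝ × ℝ × ℝ => q.2.1) _ :=
    (continuous_snd.fst).continuousOn (s := {q : ℝ × ℝ × ℝ | ρ q.1 q.2.1 q.2.2 ≠ 0})
  have cρ2 := (contP2 hρ).continuousOn (s := {q : ℝ × ℝ × ℝ | ρ q.1 q.2.1 q.2.2 ≠ 0})
  have cu2 := (contP2 hu).continuousOn (s := {q : ℝ × ℝ × ℝ | ρ q.1 q.2.1 q.2.2 ≠ 0})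
  have cw2 := (contP2 hw).continuousOn (s := {q : ℝ × ℝ × ℝ | ρ q.1 q.2.1 q.2.2 ≠ 0})
  have cp2 := (contP2 hp).continuousOn (s := {q : ℝ × ℝ × ℝ | ρ q.1 q.2.1 q.2.2 ≠ 0})
  have cL := contOn_log (ρ₀₀ := ρ₀₀) hρ h00
  have cpsi := contOn_psi g H ρ₀₀ hρ hu hw hp h00
  have cpsiZ : ContinuousOn (fun q : ℝ × ℝ × ℝ => psiZ g H ρ₀₀ ρ u w p q.1 q.2.1 q.2.2)
      {q : ℝ × ℝ × ℝ | ρ q.1 q.2.1 q.2.2 ≠ 0} :=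
    ((((((cρ2.mul ((cu.pow 2).add (cw.pow 2))).div_const 2).add
      (cρ.mul ((cu.mul cu2).add (cw.mul cw2)))).add
      ((continuousOn_const.mul cz).mul cρ2)).add
      (cρ.mul continuousOn_const)).add
      (continuousOn_const.mul (cL.mul cρ2))).add cp2
  exact (cw2.mul cpsi).add (cw.mul cpsiZ)

end EnergyAux

section MainProof
open EnergyAux

/-- For a C¹ (up to the boundary) positive solution of the 2D incompressible
stratified Euler equations on the rectangle Ω = (0,a) × (0,b) with no-flux boundary
conditions, the generalized wave-energy functional
H_nonl(t) = ∫_Ω [ ρ(u²+w²)/2 + ρgz + gH(ρ·ln(ρ/ρ₀₀) + ρ₀(z) − ρ) ] dx dz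
is constant in t on [0,T], where ρ₀(z) = ρ₀₀·exp(−z/H). -/
theorem generalized_wave_energy_conserved
    (a b T g H ρ₀₀ : ℝ) (ha : 0 < a) (hb : 0 < b) (hT : 0 < T)
    (hg : 0 < g) (hH : 0 < H) (hρ₀₀ : 0 < ρ₀₀)
    (ρ u w p : ℝ → ℝ → ℝ → ℝ)
    (hρC1 : ContDiff ℝ 1 fun q : ℝ × ℝ × ℝ => ρ q.1 q.2.1 q.2.2)
    (huC1 : ContDiff ℝ 1 fun q : ℝ × ℝ × ℝ => u q.1 q.2.1 q.2.2)
    (hwC1 : ContDiff ℝ 1 fun q : ℝ × ℝ × ℝ => w q.1 q.2.1 q.2.2)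
    (hpC1 : ContDiff ℝ 1 fun q : ℝ × ℝ × ℝ => p q.1 q.2.1 q.2.2)
    (hρpos : ∀ x ∈ Icc 0 a, ∀ z ∈ Icc 0 b, ∀ t ∈ Icc 0 T, 0 < ρ x z t)
    (hmass : ∀ x ∈ Ioo 0 a, ∀ z ∈ Ioo 0 b, ∀ t ∈ Icc 0 T,
      deriv (fun s => ρ x z s) t
        + deriv (fun y => ρ y z t * u y z t) x
        + deriv (fun y => ρ x y t * w x y t) z = 0)
    (hmomx : ∀ x ∈ Ioo 0 a, ∀ z ∈ Ioo 0 b, ∀ t ∈ Icc 0 T,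
      deriv (fun s => ρ x z s * u x z s) t
        + deriv (fun y => ρ y z t * (u y z t) ^ 2) x
        + deriv (fun y => ρ x y t * u x y t * w x y t) z
        = -deriv (fun y => p y z t) x)
    (hmomz : ∀ x ∈ Ioo 0 a, ∀ z ∈ Ioo 0 b, ∀ t ∈ Icc 0 T,
      deriv (fun s => ρ x z s * w x z s) t
        + deriv (fun y => ρ y z t * u y z t * w y z t) x
        + deriv (fun y => ρ x y t * (w x y t) ^ 2) z
        = -deriv (fun y => p x y t) z - ρ x z t * g)
    (hdiv : ∀ x ∈ Ioo 0 a, ∀ z ∈ Ioo 0 b, ∀ t ∈ Icc 0 T,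
      deriv (fun y => u y z t) x + deriv (fun y => w x y t) z = 0)
    (hbcx : ∀ z ∈ Icc 0 b, ∀ t ∈ Icc 0 T, u 0 z t = 0 ∧ u a z t = 0)
    (hbcz : ∀ x ∈ Icc 0 a, ∀ t ∈ Icc 0 T, w x 0 t = 0 ∧ w x b t = 0) :
    ∀ t ∈ Icc 0 T,
      (∫ q in Ioo (0 : ℝ) a ×ˢ Ioo (0 : ℝ) b,
        (ρ q.1 q.2 t * ((u q.1 q.2 t) ^ 2 + (w q.1 q.2 t) ^ 2) / 2
          + ρ q.1 q.2 t * g * q.2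
          + g * H * (ρ q.1 q.2 t * Real.log (ρ q.1 q.2 t / ρ₀₀)
              + ρ₀₀ * Real.exp (-q.2 / H) - ρ q.1 q.2 t)))
      = (∫ q in Ioo (0 : ℝ) a ×ˢ Ioo (0 : ℝ) b,
        (ρ q.1 q.2 0 * ((u q.1 q.2 0) ^ 2 + (w q.1 q.2 0) ^ 2) / 2
          + ρ q.1 q.2 0 * g * q.2
          + g * H * (ρ q.1 q.2 0 * Real.log (ρ q.1 q.2 0 / ρ₀₀)
              + ρ₀₀ * Real.exp (-q.2 / H) - ρ q.1 q.2 0))) := by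
  have h00 : ρ₀₀ ≠ 0 := ne_of_gt hρ₀₀
  -- the positivity set
  set S : Set (ℝ × ℝ × ℝ) := {q | ρ q.1 q.2.1 q.2.2 ≠ 0} with hS
  -- get a δ-enlarged time slab where ρ stays positive
  obtain ⟨δ, hδ, hth⟩ : ∃ δ > 0, Metric.thickening δ (Icc 0 a ×ˢ Icc 0 b ×ˢ Icc 0 T) ⊆
      {q : ℝ × ℝ × ℝ | 0 < ρ q.1 q.2.1 q.2.2} := by
    refine (isCompact_Icc.prod (isCompact_Icc.prod isCompact_Icc)).exists_thickening_subset_open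
      (isOpen_lt continuous_const hρC1.continuous) ?_
    rintro ⟨x, z, t⟩ ⟨hx, hz, ht⟩
    exact hρpos x hx z hz t ht
  have hpos' : ∀ x ∈ Icc 0 a, ∀ z ∈ Icc 0 b, ∀ s ∈ Icc (-(δ/2)) (T + δ/2), 0 < ρ x z s := by
    intro x hx z hz s hs
    set s' := max 0 (min s T) with hs'def
    have hs' : s' ∈ Icc (0:ℝ) T := ⟨le_max_left _ _, max_le hT.le (min_le_right _ _)⟩
    have habs : |s - s'| ≤ δ/2 := by
      rcases le_total s 0 with h|h
      · have h1 : s' = 0 := by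
          rw [hs'def, min_eq_left (h.trans hT.le), max_eq_left h]
        rw [h1, sub_zero, abs_of_nonpos h]
        linarith [hs.1]
      · rcases le_total s T with h'|h'
        · have h1 : s' = s := by rw [hs'def, min_eq_left h', max_eq_right h]
          rw [h1, sub_self, abs_zero]; linarith
        · have h1 : s' = T := by rw [hs'def, min_eq_right h', max_eq_right hT.le]
          rw [h1, abs_of_nonneg (by linarith)]
          linarith [hs.2]
    have hmem : ((x, z, s) : ℝ × ℝ × ℝ) ∈
        Metric.thickening δ (Icc 0 a ×ˢ Icc 0 b ×ˢ Icc 0 T) := by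
      refine Metric.mem_thickening_iff.2 ⟨(x, z, s'), ⟨hx, hz, hs'⟩, ?_⟩
      have hd : dist ((x, z, s) : ℝ × ℝ × ℝ) ((x, z, s') : ℝ × ℝ × ℝ) = |s - s'| := by
        simp [Prod.dist_eq, Real.dist_eq]
      rw [hd]; linarith
    exact hth hmem
  -- membership in S from the slab
  have hmemS : ∀ x ∈ Icc 0 a, ∀ z ∈ Icc 0 b, ∀ s ∈ Icc (-(δ/2)) (T + δ/2),
      ((x, z, s) : ℝ × ℝ × ℝ) ∈ S := by
    intro x hx z hz s hs
    exact ne_of_gt (hpos' x hx z hz s hs)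
  have hsub2 : (Ioo (0:ℝ) a ×ˢ Ioo (0:ℝ) b) ⊆ (Icc 0 a ×ˢ Icc 0 b) :=
    prod_mono Ioo_subset_Icc_self Ioo_subset_Icc_self
  have hmeasS2 : MeasurableSet (Ioo (0 : ℝ) a ×ˢ Ioo (0 : ℝ) b) :=
    measurableSet_Ioo.prod measurableSet_Ioo
  have hcomp2 : IsCompact (Icc (0:ℝ) a ×ˢ Icc (0:ℝ) b) := isCompact_Icc.prod isCompact_Icc
  -- slice continuity helper
  have slice : ∀ (h3 : ℝ × ℝ × ℝ → ℝ), ContinuousOn h3 S → ∀ s ∈ Icc (-(δ/2)) (T + δ/2),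
      ContinuousOn (fun q : ℝ × ℝ => h3 (q.1, q.2, s)) (Icc 0 a ×ˢ Icc 0 b) := by
    intro h3 hcont s hs
    refine hcont.comp ((continuous_fst.prodMk
      (continuous_snd.prodMk continuous_const)).continuousOn) ?_
    rintro ⟨x, z⟩ ⟨hx, hz⟩
    exact hmemS x hx z hz s hs
  -- bound for eT on the compact slab
  obtain ⟨C, hC⟩ : ∃ C : ℝ, ∀ q ∈ (Icc 0 a ×ˢ Icc 0 b ×ˢ Icc (-(δ/2)) (T + δ/2)),
      ‖eT g H ρ₀₀ ρ u w q.1 q.2.1 q.2.2‖ ≤ C := by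
    refine (isCompact_Icc.prod (isCompact_Icc.prod isCompact_Icc)).exists_bound_of_continuousOn
      ((contOn_eT g H ρ₀₀ hρC1 huC1 hwC1 h00).mono ?_)
    rintro ⟨x, z, s⟩ ⟨hx, hz, hs⟩
    exact hmemS x hx z hz s hs
  -- derivative of the energy functional
  have hEderiv : ∀ t₀ ∈ Icc 0 T,
      HasDerivAt (fun s => ∫ q in Ioo (0:ℝ) a ×ˢ Ioo (0:ℝ) b, ener g H ρ₀₀ ρ u w q.1 q.2 s)
        (∫ q in Ioo (0:ℝ) a ×ˢ Ioo (0:ℝ) b, eT g H ρ₀₀ ρ u w q.1 q.2 t₀) t₀ := by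
    intro t₀ ht₀
    have hballIcc : ∀ s ∈ Metric.ball t₀ (δ/4), s ∈ Icc (-(δ/2)) (T + δ/2) := by
      intro s hs
      rw [Metric.mem_ball, Real.dist_eq] at hs
      have h1 := abs_lt.1 hs
      exact ⟨by linarith [ht₀.1], by linarith [ht₀.2]⟩
    have ht₀' : t₀ ∈ Icc (-(δ/2)) (T + δ/2) := ⟨by linarith [ht₀.1, hδ], by linarith [ht₀.2, hδ]⟩
    refine (hasDerivAt_integral_of_dominated_loc_of_lip (s := Metric.ball t₀ (δ/4))
      (bound := fun _ => C) (Metric.ball_mem_nhds t₀ (by positivity)) ?_ ?_ ?_ ?_ ?_ ?_).2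
    · filter_upwards [Metric.ball_mem_nhds t₀ (show (0:ℝ) < δ/4 by positivity)] with s hs
      exact (((slice _ (contOn_ener g H ρ₀₀ hρC1 huC1 hwC1 h00) s (hballIcc s hs)).mono
        hsub2)).aestronglyMeasurable hmeasS2
    · exact ((slice _ (contOn_ener g H ρ₀₀ hρC1 huC1 hwC1 h00) t₀
        ht₀').integrableOn_compact hcomp2).mono_set hsub2
    · exact (((slice _ (contOn_eT g H ρ₀₀ hρC1 huC1 hwC1 h00) t₀ ht₀').mono
        hsub2)).aestronglyMeasurable hmeasS2
    · filter_upwards [self_mem_ae_restrict hmeasS2] with q hq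
      refine (convex_ball t₀ (δ/4)).lipschitzOnWith_of_nnnorm_hasDerivWithin_le
        (f' := fun s => eT g H ρ₀₀ ρ u w q.1 q.2 s) (fun s hs => ?_) (fun s hs => ?_)
      · exact (ener_T g H ρ₀₀ hρC1 huC1 hwC1 q.1 q.2 s
          (ne_of_gt (hpos' q.1 (hsub2 hq).1 q.2 (hsub2 hq).2 s (hballIcc s hs))) h00).hasDerivWithinAt
      · have hb := hC (q.1, q.2, s) ⟨(hsub2 hq).1, (hsub2 hq).2, hballIcc s hs⟩
        rw [← NNReal.coe_le_coe]
        simp only [coe_nnnorm, Real.coe_nnabs]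
        exact le_trans hb (le_abs_self C)
    · exact integrableOn_const (lt_of_le_of_lt (measure_mono hsub2)
        hcomp2.measure_lt_top).ne
    · filter_upwards [self_mem_ae_restrict hmeasS2] with q hq
      exact ener_T g H ρ₀₀ hρC1 huC1 hwC1 q.1 q.2 t₀
        (ne_of_gt (hpos' q.1 (hsub2 hq).1 q.2 (hsub2 hq).2 t₀ ht₀')) h00
  -- the space integral of eT vanishes
  have hzero : ∀ t₀ ∈ Icc 0 T,
      (∫ q in Ioo (0:ℝ) a ×ˢ Ioo (0:ℝ) b, eT g H ρ₀₀ ρ u w q.1 q.2 t₀) = 0 := by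
    intro t₀ ht₀
    have ht₀' : t₀ ∈ Icc (-(δ/2)) (T + δ/2) := ⟨by linarith [ht₀.1, hδ], by linarith [ht₀.2, hδ]⟩
    have hFXc := slice _ (contOn_FX g H ρ₀₀ hρC1 huC1 hwC1 hpC1 h00) t₀ ht₀'
    have hGZc := slice _ (contOn_GZ g H ρ₀₀ hρC1 huC1 hwC1 hpC1 h00) t₀ ht₀'
    have hFXint : IntegrableOn (fun q : ℝ × ℝ => FX g H ρ₀₀ ρ u w p q.1 q.2 t₀)
        (Ioo (0:ℝ) a ×ˢ Ioo (0:ℝ) b) := (hFXc.integrableOn_compact hcomp2).mono_set hsub2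
    have hGZint : IntegrableOn (fun q : ℝ × ℝ => GZ g H ρ₀₀ ρ u w p q.1 q.2 t₀)
        (Ioo (0:ℝ) a ×ˢ Ioo (0:ℝ) b) := (hGZc.integrableOn_compact hcomp2).mono_set hsub2
    have h1 : (∫ q in Ioo (0:ℝ) a ×ˢ Ioo (0:ℝ) b, eT g H ρ₀₀ ρ u w q.1 q.2 t₀)
        = ∫ q in Ioo (0:ℝ) a ×ˢ Ioo (0:ℝ) b,
            -(FX g H ρ₀₀ ρ u w p q.1 q.2 t₀ + GZ g H ρ₀₀ ρ u w p q.1 q.2 t₀) := by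
      refine setIntegral_congr_fun hmeasS2 ?_
      rintro ⟨x, z⟩ ⟨hx, hz⟩
      exact keyIdentity g H ρ₀₀ hρC1 huC1 hwC1 hpC1 x z t₀
        (hmass x hx z hz t₀ ht₀) (hmomx x hx z hz t₀ ht₀)
        (hmomz x hx z hz t₀ ht₀) (hdiv x hx z hz t₀ ht₀)
    rw [h1, integral_neg, integral_add hFXint hGZint]
    have hFX0 : (∫ q in Ioo (0:ℝ) a ×ˢ Ioo (0:ℝ) b, FX g H ρ₀₀ ρ u w p q.1 q.2 t₀) = 0 := by
      rw [Measure.volume_eq_prod]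
      have hFXint' : IntegrableOn (fun q : ℝ × ℝ => FX g H ρ₀₀ ρ u w p q.1 q.2 t₀)
          (Ioo (0:ℝ) a ×ˢ Ioo (0:ℝ) b) ((volume : Measure ℝ).prod volume) := by
        rwa [← Measure.volume_eq_prod]
      rw [setIntegral_prod _ hFXint']
      have hswap : (∫ x in Ioo (0:ℝ) a, ∫ z in Ioo (0:ℝ) b, FX g H ρ₀₀ ρ u w p x z t₀)
          = ∫ z in Ioo (0:ℝ) b, ∫ x in Ioo (0:ℝ) a, FX g H ρ₀₀ ρ u w p x z t₀ := by
        refine integral_integral_swap ?_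
        rw [Measure.prod_restrict]
        exact hFXint'
      rw [hswap]
      have hinner : ∀ z ∈ Ioo (0:ℝ) b,
          (∫ x in Ioo (0:ℝ) a, FX g H ρ₀₀ ρ u w p x z t₀) = 0 := by
        intro z hz
        have hz' : z ∈ Icc (0:ℝ) b := Ioo_subset_Icc_self hz
        have heq : (∫ x in Ioo (0:ℝ) a, FX g H ρ₀₀ ρ u w p x z t₀)
            = ∫ x in (0:ℝ)..a, FX g H ρ₀₀ ρ u w p x z t₀ := by
          rw [intervalIntegral.integral_of_le ha.le, integral_Ioc_eq_integral_Ioo]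
        rw [heq]
        have hftc := intervalIntegral.integral_eq_sub_of_hasDerivAt
          (f := fun x => u x z t₀ * psi g H ρ₀₀ ρ u w p x z t₀)
          (f' := fun x => FX g H ρ₀₀ ρ u w p x z t₀)
          (a := (0:ℝ)) (b := a) ?_ ?_
        · rw [hftc, (hbcx z hz' t₀ ht₀).1, (hbcx z hz' t₀ ht₀).2]
          ring
        · intro x hx
          rw [uIcc_of_le ha.le] at hx
          exact F_X g H ρ₀₀ hρC1 huC1 hwC1 hpC1 x z t₀
            (ne_of_gt (hpos' x hx z hz' t₀ ht₀')) h00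
        · apply ContinuousOn.intervalIntegrable
          rw [uIcc_of_le ha.le]
          refine hFXc.comp ((continuous_id.prodMk continuous_const).continuousOn) ?_
          intro x hx
          exact ⟨hx, hz'⟩
      rw [setIntegral_congr_fun measurableSet_Ioo hinner, integral_zero]
    have hGZ0 : (∫ q in Ioo (0:ℝ) a ×ˢ Ioo (0:ℝ) b, GZ g H ρ₀₀ ρ u w p q.1 q.2 t₀) = 0 := by
      rw [Measure.volume_eq_prod]
      have hGZint' : IntegrableOn (fun q : ℝ × ℝ => GZ g H ρ₀₀ ρ u w p q.1 q.2 t₀)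
          (Ioo (0:ℝ) a ×ˢ Ioo (0:ℝ) b) ((volume : Measure ℝ).prod volume) := by
        rwa [← Measure.volume_eq_prod]
      rw [setIntegral_prod _ hGZint']
      have hinner : ∀ x ∈ Ioo (0:ℝ) a,
          (∫ z in Ioo (0:ℝ) b, GZ g H ρ₀₀ ρ u w p x z t₀) = 0 := by
        intro x hx
        have hx' : x ∈ Icc (0:ℝ) a := Ioo_subset_Icc_self hx
        have heq : (∫ z in Ioo (0:ℝ) b, GZ g H ρ₀₀ ρ u w p x z t₀)
            = ∫ z in (0:ℝ)..b, GZ g H ρ₀₀ ρ u w p x z t₀ := by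
          rw [intervalIntegral.integral_of_le hb.le, integral_Ioc_eq_integral_Ioo]
        rw [heq]
        have hftc := intervalIntegral.integral_eq_sub_of_hasDerivAt
          (f := fun z => w x z t₀ * psi g H ρ₀₀ ρ u w p x z t₀)
          (f' := fun z => GZ g H ρ₀₀ ρ u w p x z t₀)
          (a := (0:ℝ)) (b := b) ?_ ?_
        · rw [hftc, (hbcz x hx' t₀ ht₀).1, (hbcz x hx' t₀ ht₀).2]
          ring
        · intro z hzz
          rw [uIcc_of_le hb.le] at hzz
          exact G_Z g H ρ₀₀ hρC1 huC1 hwC1 hpC1 x z t₀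
            (ne_of_gt (hpos' x hx' z hzz t₀ ht₀')) h00
        · apply ContinuousOn.intervalIntegrable
          rw [uIcc_of_le hb.le]
          refine hGZc.comp ((continuous_const.prodMk continuous_id).continuousOn) ?_
          intro z hzz
          exact ⟨hx', hzz⟩
      rw [setIntegral_congr_fun measurableSet_Ioo hinner, integral_zero]
    rw [hFX0, hGZ0]
    simp
  -- conclude constancy
  have hzeroD : ∀ s ∈ Icc 0 T,
      HasDerivAt (fun s => ∫ q in Ioo (0:ℝ) a ×ˢ Ioo (0:ℝ) b,
        ener g H ρ₀₀ ρ u w q.1 q.2 s) 0 s := by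
    intro s hs
    have h := hEderiv s hs
    rwa [hzero s hs] at h
  have hdiffOn : DifferentiableOn ℝ
      (fun s => ∫ q in Ioo (0:ℝ) a ×ˢ Ioo (0:ℝ) b, ener g H ρ₀₀ ρ u w q.1 q.2 s)
      (Icc 0 T) := fun s hs => (hzeroD s hs).differentiableAt.differentiableWithinAt
  have hconst := constant_of_derivWithin_zero hdiffOn (fun s hs =>
    ((hzeroD s (mem_Icc_of_Ico hs)).hasDerivWithinAt).derivWithin
      (uniqueDiffOn_Icc hT s (mem_Icc_of_Ico hs)))
  intro t ht
  exact hconst t ht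

end MainProof
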